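/- Let K be a central ideal of a Lie ring L such that L² ∩ K is finite. Then L² ∩ K is isomorphic (as abelian group) to the image of the transgression map Tra : Hom(K,ℂ*) → H²(L/K,ℂ*). In particular L² ∩ K embeds into H²(L/K,ℂ*), and if Tra is surjective then L² ∩ K ≅ H²(L/K,ℂ*). -/

import Mathlib

/-- The five cocycle conditions of Horn–Zandi for a pair `(f, g)` of maps `L × L → A`,
where `L` is a Lie ring and `A` a trivial `L`-module (an abelian group). -/
def IsLieRingCocycle {L A : Type*} [LieRing L] [AddCommGroup A]
    (f g : L → L → A) : Prop :=
  (∀ x y z : L, f (x + y) z = f x z + f y z + g ⁅x, z⁆ ⁅y, z⁆) ∧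
  (∀ x y z : L, f x (y + z) = f x y + f x z + g ⁅x, y⁆ ⁅x, z⁆) ∧
  (∀ x : L, f x x = 0) ∧
  (∀ x y z : L, f x ⁅y, z⁆ + f z ⁅x, y⁆ + f y ⁅z, x⁆ =
    - g ⁅x, ⁅y, z⁆⁆ ⁅z, ⁅x, y⁆⁆ - g (-⁅y, ⁅z, x⁆⁆) ⁅y, ⁅z, x⁆⁆) ∧
  (∀ x y z : L, g (x + y) z + g x y = g x (y + z) + g y z) ∧
  (∀ x y : L, g x y = g y x)

/-- Coboundaries: pairs arising from a map `t : L → A` with `t 0 = 0` via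
`f (x, y) = -t ⁅x, y⁆` and `g (x, y) = t x + t y - t (x + y)`. -/
def IsLieRingCoboundary {L A : Type*} [LieRing L] [AddCommGroup A]
    (f g : L → L → A) : Prop :=
  ∃ t : L → A, t 0 = 0 ∧ (∀ x y : L, f x y = - t ⁅x, y⁆) ∧
    (∀ x y : L, g x y = t x + t y - t (x + y))

def lieZ2 (L A : Type*) [LieRing L] [AddCommGroup A] :
    AddSubgroup ((L → L → A) × (L → L → A)) where
  carrier := {p | IsLieRingCocycle p.1 p.2}
  zero_mem' := by
    refine ⟨?_, ?_, ?_, ?_, ?_, ?_⟩ <;> intros <;> simp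
  add_mem' := by
    intro p q hp hq
    obtain ⟨h1, h2, h3, h4, h5, h6⟩ := hp
    obtain ⟨h1', h2', h3', h4', h5', h6'⟩ := hq
    refine ⟨fun x y z => ?_, fun x y z => ?_, fun x => ?_, fun x y z => ?_,
      fun x y z => ?_, fun x y => ?_⟩ <;>
      simp only [Prod.fst_add, Prod.snd_add, Pi.add_apply]
    · rw [h1, h1']; abel
    · rw [h2, h2']; abel
    · rw [h3, h3']; abel
    · calc p.1 x ⁅y, z⁆ + q.1 x ⁅y, z⁆ + (p.1 z ⁅x, y⁆ + q.1 z ⁅x, y⁆) +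
            (p.1 y ⁅z, x⁆ + q.1 y ⁅z, x⁆)
          = (p.1 x ⁅y, z⁆ + p.1 z ⁅x, y⁆ + p.1 y ⁅z, x⁆) +
            (q.1 x ⁅y, z⁆ + q.1 z ⁅x, y⁆ + q.1 y ⁅z, x⁆) := by abel
        _ = (- p.2 ⁅x, ⁅y, z⁆⁆ ⁅z, ⁅x, y⁆⁆ - p.2 (-⁅y, ⁅z, x⁆⁆) ⁅y, ⁅z, x⁆⁆) +
            (- q.2 ⁅x, ⁅y, z⁆⁆ ⁅z, ⁅x, y⁆⁆ - q.2 (-⁅y, ⁅z, x⁆⁆) ⁅y, ⁅z, x⁆⁆) := by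
              rw [h4, h4']
        _ = _ := by abel
    · calc p.2 (x + y) z + q.2 (x + y) z + (p.2 x y + q.2 x y)
          = (p.2 (x + y) z + p.2 x y) + (q.2 (x + y) z + q.2 x y) := by abel
        _ = (p.2 x (y + z) + p.2 y z) + (q.2 x (y + z) + q.2 y z) := by rw [h5, h5']
        _ = _ := by abel
    · rw [h6, h6']
  neg_mem' := by
    intro p hp
    obtain ⟨h1, h2, h3, h4, h5, h6⟩ := hp
    refine ⟨fun x y z => ?_, fun x y z => ?_, fun x => ?_, fun x y z => ?_,
      fun x y z => ?_, fun x y => ?_⟩ <;>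
      simp only [Prod.fst_neg, Prod.snd_neg, Pi.neg_apply]
    · rw [h1]; abel
    · rw [h2]; abel
    · rw [h3]; abel
    · rw [← neg_add, ← neg_add, h4]; abel
    · rw [← neg_add, ← neg_add, h5]
    · rw [h6]

def lieB2 (L A : Type*) [LieRing L] [AddCommGroup A] :
    AddSubgroup (lieZ2 L A) where
  carrier := {p | IsLieRingCoboundary p.val.1 p.val.2}
  zero_mem' := ⟨0, by simp, by simp, by simp⟩
  add_mem' := by
    rintro p q ⟨t, ht0, htf, htg⟩ ⟨s, hs0, hsf, hsg⟩
    refine ⟨t + s, by simp [ht0, hs0], fun x y => ?_, fun x y => ?_⟩ <;>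
      simp only [AddSubgroup.coe_add, Prod.fst_add, Prod.snd_add, Pi.add_apply,
        htf, hsf, htg, hsg] <;> abel
  neg_mem' := by
    rintro p ⟨t, ht0, htf, htg⟩
    refine ⟨-t, by simp [ht0], fun x y => ?_, fun x y => ?_⟩ <;>
      simp only [AddSubgroup.coe_neg, Prod.fst_neg, Prod.snd_neg, Pi.neg_apply,
        htf, htg] <;> abel

/-- Second Lie ring cohomology of `L` with coefficients in the trivial module `A`. -/
def lieH2 (L A : Type*) [LieRing L] [AddCommGroup A] :=
  lieZ2 L A ⧸ lieB2 L A

instance (L A : Type*) [LieRing L] [AddCommGroup A] : AddCommGroup (lieH2 L A) :=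
  QuotientAddGroup.Quotient.addCommGroup _

/-- Let `K` be a central ideal of a Lie ring `L` with `L² ∩ K`
finite. Then `L² ∩ K` is isomorphic, as an abelian group, to the image of the
transgression map `Tra : Hom(K, ℂ*) → H²(L/K, ℂ*)` associated to the central
extension `0 → K → L → L/K → 0` (via a section `μ` with `μ 0 = 0` and
associated cocycle `(F, G)`). In particular `L² ∩ K` embeds into
`H²(L/K, ℂ*)`, and if `Tra` is surjective then `L² ∩ K ≅ H²(L/K, ℂ*)`.
Here `ℂ*` is the multiplicative group of nonzero complex numbers, regarded as
the (additively written) trivial coefficient module `Additive ℂˣ`. -/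

lemma cunits_exists_root (x : ℂˣ) {n : ℕ} (hn : n ≠ 0) : ∃ y : ℂˣ, y ^ n = x := by
  obtain ⟨z, hz⟩ := IsAlgClosed.exists_pow_nat_eq (k := ℂ) (x : ℂ) (Nat.pos_of_ne_zero hn)
  have hz0 : z ≠ 0 := by
    rintro rfl
    rw [zero_pow hn] at hz
    exact x.ne_zero hz.symm
  exact ⟨Units.mk0 z hz0, by ext; push_cast; exact hz⟩

noncomputable instance : RootableBy ℂˣ ℕ where
  root x n := if h : n = 0 then 1 else Classical.choose (cunits_exists_root x h)
  root_zero x := by simp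
  root_cancel := by
    intro n x hn
    simp only [dif_neg hn]
    exact Classical.choose_spec (cunits_exists_root x hn)

noncomputable instance : RootableBy ℂˣ ℤ := Group.rootableByIntOfRootableByNat ℂˣ

noncomputable instance : DivisibleBy (Additive ℂˣ) ℤ where
  div a n := Additive.ofMul (RootableBy.root a.toMul n)
  div_zero a := by
    show Additive.ofMul (RootableBy.root a.toMul (0 : ℤ)) = 0
    rw [RootableBy.root_zero]; rfl
  div_cancel a h := by
    show _ • Additive.ofMul (RootableBy.root a.toMul _) = a
    rw [← ofMul_zpow, RootableBy.root_cancel _ h]; rfl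

noncomputable instance divisibleByULift {A : Type*} [AddCommGroup A] [DivisibleBy A ℤ] :
    DivisibleBy (ULift A) ℤ where
  div a n := ⟨DivisibleBy.div a.down n⟩
  div_zero a := by ext; exact DivisibleBy.div_zero a.down
  div_cancel a h := by ext; exact DivisibleBy.div_cancel a.down h

universe u

/-- Extension of homomorphisms into `Additive ℂˣ` along injections. -/
lemma extend_hom {X Y : Type u} [AddCommGroup X] [AddCommGroup Y]
    (f : X →+ Y) (hf : Function.Injective f) (g : X →+ Additive ℂˣ) :
    ∃ h : Y →+ Additive ℂˣ, ∀ x, h (f x) = g x := by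
  set A := ULift.{u} (Additive ℂˣ)
  have inj : Module.Injective ℤ A := (Module.Baer.of_divisible A).injective
  let up : Additive ℂˣ →+ A := (AddEquiv.ulift (α := Additive ℂˣ)).symm.toAddMonoidHom
  obtain ⟨h', hh'⟩ := inj.out f.toIntLinearMap hf (up.comp g).toIntLinearMap
  exact ⟨(AddEquiv.ulift.toAddMonoidHom.comp h'.toAddMonoidHom), fun x => by
    have := hh' x
    simpa [up] using congrArg (AddEquiv.ulift (α := Additive ℂˣ)) this⟩

/-- Duality for finite abelian groups with values in `ℂˣ`. -/
lemma dual_iso (D : Type*) [AddCommGroup D] [Finite D] :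
    Nonempty ((D →+ Additive ℂˣ) ≃+ D) := by
  haveI : NeZero ((Monoid.exponent (Multiplicative D) : ℂ)) :=
    ⟨by exact_mod_cast
      (Monoid.ExponentExists.of_finite (G := Multiplicative D)).exponent_pos.ne'⟩
  obtain ⟨e⟩ := CommGroup.monoidHom_mulEquiv_of_hasEnoughRootsOfUnity (Multiplicative D) ℂ
  have hmul : ∀ χ ψ : D →+ Additive ℂˣ,
      AddMonoidHom.toMultiplicativeLeft (χ + ψ) =
        AddMonoidHom.toMultiplicativeLeft χ * AddMonoidHom.toMultiplicativeLeft ψ := by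
    intro χ ψ; ext x; rfl
  refine ⟨AddEquiv.mk' ((AddMonoidHom.toMultiplicativeLeft).trans
    (e.toEquiv.trans Multiplicative.toAdd)) ?_⟩
  intro χ ψ
  simp [hmul, map_mul]

/-- Pushing a cocycle forward along a homomorphism of coefficients. -/
lemma IsLieRingCocycle.comp {L A B : Type*} [LieRing L] [AddCommGroup A] [AddCommGroup B]
    {f g : L → L → A} (h : IsLieRingCocycle f g) (χ : A →+ B) :
    IsLieRingCocycle (fun x y => χ (f x y)) (fun x y => χ (g x y)) := by
  obtain ⟨h1, h2, h3, h4, h5, h6⟩ := h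
  refine ⟨fun x y z => ?_, fun x y z => ?_, fun x => ?_, fun x y z => ?_,
    fun x y z => ?_, fun x y => ?_⟩ <;> dsimp only
  · rw [h1]; simp [map_add]
  · rw [h2]; simp [map_add]
  · rw [h3]; simp
  · rw [← map_add, ← map_add, h4]; rw [show -g ⁅x, ⁅y, z⁆⁆ ⁅z, ⁅x, y⁆⁆ - g (-⁅y, ⁅z, x⁆⁆) ⁅y, ⁅z, x⁆⁆ = -(g ⁅x, ⁅y, z⁆⁆ ⁅z, ⁅x, y⁆⁆ + g (-⁅y, ⁅z, x⁆⁆) ⁅y, ⁅z, x⁆⁆) by abel, map_neg, map_add]; abel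
  · rw [← map_add, ← map_add, h5]
  · rw [h6]

lemma lie_jacobi_cyclic {L : Type*} [LieRing L] (a b c : L) :
    ⁅a, ⁅b, c⁆⁆ + ⁅c, ⁅a, b⁆⁆ + ⁅b, ⁅c, a⁆⁆ = 0 := by
  rw [leibniz_lie a b c, ← lie_skew ⁅a, b⁆ c, ← lie_skew a c, lie_neg b]
  abel
theorem derived_inter_central_iso_transgression_image {L : Type*} [LieRing L]
    (K : LieIdeal ℤ L) (hK : K ≤ LieAlgebra.center ℤ L)
    (hfin : Finite ↥(⁅(⊤ : LieIdeal ℤ L), (⊤ : LieIdeal ℤ L)⁆ ⊓ K : LieIdeal ℤ L))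
    (mu : (L ⧸ K) → L)
    (hmu : ∀ q : L ⧸ K, (LieSubmodule.Quotient.mk (N := K) (mu q)) = q)
    (hmu0 : mu 0 = 0)
    (F G : (L ⧸ K) → (L ⧸ K) → K)
    (hF : ∀ s t : L ⧸ K, (F s t : L) = ⁅mu s, mu t⁆ - mu ⁅s, t⁆)
    (hG : ∀ s t : L ⧸ K, (G s t : L) = mu s + mu t - mu (s + t))
    (Tra : (K →+ Additive ℂˣ) →+ lieH2 (L ⧸ K) (Additive ℂˣ))
    (hTra : ∀ (χ : K →+ Additive ℂˣ) (p : lieZ2 (L ⧸ K) (Additive ℂˣ)),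
      p.val.1 = (fun s t => χ (F s t)) →
      p.val.2 = (fun s t => χ (G s t)) →
      Tra χ = QuotientAddGroup.mk p) :
    Nonempty
      ((↥(⁅(⊤ : LieIdeal ℤ L), (⊤ : LieIdeal ℤ L)⁆ ⊓ K : LieIdeal ℤ L)) ≃+
        Tra.range) ∧
    (Function.Surjective Tra →
      Nonempty
        ((↥(⁅(⊤ : LieIdeal ℤ L), (⊤ : LieIdeal ℤ L)⁆ ⊓ K : LieIdeal ℤ L)) ≃+
          lieH2 (L ⧸ K) (Additive ℂˣ))) := by
  classical
  set I : LieIdeal ℤ L := ⁅(⊤ : LieIdeal ℤ L), (⊤ : LieIdeal ℤ L)⁆ with hIdef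
  let π : L → L ⧸ K := LieSubmodule.Quotient.mk (N := K)
  have hπadd : ∀ x y : L, π (x + y) = π x + π y := fun x y => rfl
  have hπsub : ∀ x y : L, π (x - y) = π x - π y := fun x y => rfl
  have hπbr : ∀ x y : L, π ⁅x, y⁆ = ⁅π x, π y⁆ := fun x y =>
    LieSubmodule.Quotient.mk_bracket (I := K) x y
  have hπmu : ∀ q : L ⧸ K, π (mu q) = q := hmu
  have hcent : ∀ k : L, k ∈ K → ∀ y : L, ⁅k, y⁆ = 0 := by
    intro k hk y
    have h := (LieModule.mem_maxTrivSubmodule ℤ L L k).mp (hK hk) y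
    rw [← lie_skew, h, neg_zero]
  have hbrl : ∀ a b c : L, π a = π b → ⁅a, c⁆ = ⁅b, c⁆ := by
    intro a b c h
    have hmem : a - b ∈ K := by
      have : π (a - b) = 0 := by rw [hπsub, h, sub_self]
      exact (LieSubmodule.Quotient.mk_eq_zero' (N := K)).mp this
    have h0 : ⁅a - b, c⁆ = 0 := hcent _ hmem c
    rw [sub_lie] at h0
    exact sub_eq_zero.mp h0
  have hbrr : ∀ a b c : L, π a = π b → ⁅c, a⁆ = ⁅c, b⁆ := by
    intro a b c h
    rw [← lie_skew, hbrl a b c h, lie_skew]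
  have hxk : ∀ x : L, x - mu (π x) ∈ K := by
    intro x
    have : π (x - mu (π x)) = 0 := by rw [hπsub, hπmu, sub_self]
    exact (LieSubmodule.Quotient.mk_eq_zero' (N := K)).mp this
  -- The pair (F, G) is a K-valued cocycle.
  have hFGcoc : IsLieRingCocycle F G := by
    refine ⟨fun x y z => ?_, fun x y z => ?_, fun x => ?_, fun x y z => ?_,
      fun x y z => ?_, fun x y => ?_⟩
    · apply Subtype.ext
      push_cast [hF, hG]
      have h1 : ⁅mu (x + y), mu z⁆ = ⁅mu x + mu y, mu z⁆ :=
        hbrl _ _ _ (by rw [hπmu, hπadd, hπmu, hπmu])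
      rw [h1, add_lie, add_lie]
      abel
    · apply Subtype.ext
      push_cast [hF, hG]
      have h1 : ⁅mu x, mu (y + z)⁆ = ⁅mu x, mu y + mu z⁆ :=
        hbrr _ _ _ (by rw [hπmu, hπadd, hπmu, hπmu])
      rw [h1, lie_add, lie_add]
      abel
    · apply Subtype.ext
      push_cast [hF]
      rw [lie_self, lie_self, hmu0]
      abel
    · apply Subtype.ext
      push_cast [hF, hG]
      have e1 : ⁅mu x, mu ⁅y, z⁆⁆ = ⁅mu x, ⁅mu y, mu z⁆⁆ :=
        hbrr _ _ _ (by rw [hπmu, hπbr, hπmu, hπmu])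
      have e2 : ⁅mu z, mu ⁅x, y⁆⁆ = ⁅mu z, ⁅mu x, mu y⁆⁆ :=
        hbrr _ _ _ (by rw [hπmu, hπbr, hπmu, hπmu])
      have e3 : ⁅mu y, mu ⁅z, x⁆⁆ = ⁅mu y, ⁅mu z, mu x⁆⁆ :=
        hbrr _ _ _ (by rw [hπmu, hπbr, hπmu, hπmu])
      have jac : ⁅mu x, ⁅mu y, mu z⁆⁆ + ⁅mu z, ⁅mu x, mu y⁆⁆ + ⁅mu y, ⁅mu z, mu x⁆⁆ = 0 :=
        lie_jacobi_cyclic _ _ _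
      have jacq : ⁅x, ⁅y, z⁆⁆ + ⁅z, ⁅x, y⁆⁆ = -⁅y, ⁅z, x⁆⁆ := by
        have h := lie_jacobi_cyclic x y z
        rwa [add_eq_zero_iff_eq_neg] at h
      have hmusum : mu (⁅x, ⁅y, z⁆⁆ + ⁅z, ⁅x, y⁆⁆) = mu (-⁅y, ⁅z, x⁆⁆) := by rw [jacq]
      rw [e1, e2, e3]
      rw [show ⁅mu x, ⁅mu y, mu z⁆⁆ - mu ⁅x, ⁅y, z⁆⁆ + (⁅mu z, ⁅mu x, mu y⁆⁆ - mu ⁅z, ⁅x, y⁆⁆) +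
            (⁅mu y, ⁅mu z, mu x⁆⁆ - mu ⁅y, ⁅z, x⁆⁆) =
          (⁅mu x, ⁅mu y, mu z⁆⁆ + ⁅mu z, ⁅mu x, mu y⁆⁆ + ⁅mu y, ⁅mu z, mu x⁆⁆) -
            mu ⁅x, ⁅y, z⁆⁆ - mu ⁅z, ⁅x, y⁆⁆ - mu ⁅y, ⁅z, x⁆⁆ from by abel,
        jac, hmusum, neg_add_cancel, hmu0]
      abel
    · apply Subtype.ext
      push_cast [hG]
      rw [← add_assoc x y z]
      abel
    · apply Subtype.ext
      push_cast [hG]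
      rw [add_comm x y]
      abel
  have hcoc : ∀ χ : K →+ Additive ℂˣ,
      ((fun s t => χ (F s t), fun s t => χ (G s t)) :
        ((L ⧸ K) → (L ⧸ K) → Additive ℂˣ) × ((L ⧸ K) → (L ⧸ K) → Additive ℂˣ)) ∈
        lieZ2 (L ⧸ K) (Additive ℂˣ) :=
    fun χ => hFGcoc.comp χ
  have hTraχ : ∀ χ : K →+ Additive ℂˣ,
      Tra χ = QuotientAddGroup.mk (⟨_, hcoc χ⟩ : lieZ2 (L ⧸ K) (Additive ℂˣ)) :=
    fun χ => hTra χ _ rfl rfl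
  -- Kernel characterization
  have hker : ∀ χ : K →+ Additive ℂˣ,
      Tra χ = 0 ↔ ∀ k : K, (k : L) ∈ I → χ k = 0 := by
    intro χ
    rw [hTraχ χ]; refine Iff.trans (QuotientAddGroup.eq_zero_iff (N := lieB2 (L ⧸ K) (Additive ℂˣ)) _) ?_
    show IsLieRingCoboundary _ _ ↔ _
    constructor
    · rintro ⟨t, ht0, htf, htg⟩ k hk
      have htf' : ∀ x y : L ⧸ K, χ (F x y) = - t ⁅x, y⁆ := htf
      have htg' : ∀ x y : L ⧸ K, χ (G x y) = t x + t y - t (x + y) := htg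
      let ν : L →+ Additive ℂˣ := AddMonoidHom.mk'
        (fun x => t (π x) + χ ⟨x - mu (π x), hxk x⟩) (by
          intro x y
          have hGel : (⟨x + y - mu (π (x + y)), hxk _⟩ : K) =
              ⟨x - mu (π x), hxk x⟩ + ⟨y - mu (π y), hxk y⟩ + G (π x) (π y) := by
            apply Subtype.ext
            push_cast [hG]
            rw [hπadd]
            abel
          rw [hGel, map_add, map_add, htg', hπadd]
          abel)
      have hνbr : ∀ a b : L, ν ⁅a, b⁆ = 0 := by
        intro a b
        have helt : (⟨⁅a, b⁆ - mu (π ⁅a, b⁆), hxk _⟩ : K) = F (π a) (π b) := by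
          apply Subtype.ext
          push_cast [hF]
          rw [hπbr]
          have : ⁅a, b⁆ = ⁅mu (π a), mu (π b)⁆ := by
            rw [hbrl a (mu (π a)) b (by rw [hπmu]), hbrr b (mu (π b)) _ (by rw [hπmu])]
          rw [this]
        show t (π ⁅a, b⁆) + χ _ = 0
        rw [helt, htf', hπbr]
        abel
      have hνI : ∀ x ∈ I, ν x = 0 := by
        intro x hx
        have hx' : x ∈ Submodule.span ℤ
            {m : L | ∃ a ∈ (⊤ : LieIdeal ℤ L), ∃ b ∈ (⊤ : LieIdeal ℤ L), ⁅a, b⁆ = m} := by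
          rw [← LieSubmodule.lieIdeal_oper_eq_linear_span']
          exact hx
        refine Submodule.span_induction ?_ ?_ ?_ ?_ hx'
        · rintro m ⟨a, -, b, -, rfl⟩; exact hνbr a b
        · exact map_zero ν
        · intro a b _ _ ha hb; rw [map_add, ha, hb, add_zero]
        · intro n a _ ha; rw [map_zsmul, ha, smul_zero]
      have h0 : π (k : L) = 0 := (LieSubmodule.Quotient.mk_eq_zero' (N := K)).mpr k.2
      have hνk : ν (k : L) = χ k := by
        show t (π (k : L)) + χ ⟨(k : L) - mu (π (k : L)), hxk _⟩ = χ k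
        have helt : (⟨(k : L) - mu (π (k : L)), hxk _⟩ : K) = k := by
          apply Subtype.ext
          push_cast
          rw [h0, hmu0, sub_zero]
        rw [helt, h0, ht0, zero_add]
      rw [← hνk]
      exact hνI _ hk
    · intro hvanish
      let Msub : AddSubgroup L := (LieSubmodule.toSubmodule I).toAddSubgroup
      let j : K →+ L ⧸ Msub := (QuotientAddGroup.mk' Msub).comp
        ((LieSubmodule.toSubmodule K).subtype.toAddMonoidHom)
      have hjker : ∀ x : K, j x = 0 ↔ (x : L) ∈ I := by
        intro x
        show QuotientAddGroup.mk' Msub (x : L) = 0 ↔ _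
        rw [QuotientAddGroup.mk'_apply, QuotientAddGroup.eq_zero_iff]
        exact Iff.rfl
      let χbar : (K ⧸ j.ker) →+ Additive ℂˣ := QuotientAddGroup.lift j.ker χ (by
        intro x hx
        exact hvanish x ((hjker x).mp (AddMonoidHom.mem_ker.mp hx)))
      obtain ⟨νbar, hνbar⟩ := extend_hom (QuotientAddGroup.kerLift j)
        (QuotientAddGroup.kerLift_injective j) χbar
      let ν : L →+ Additive ℂˣ := νbar.comp (QuotientAddGroup.mk' Msub)
      have hνK : ∀ x : K, ν (x : L) = χ x := by
        intro x
        have h1 : ν (x : L) = νbar (QuotientAddGroup.kerLift j (QuotientAddGroup.mk x)) := rfl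
        rw [h1, hνbar]
        rfl
      have hνI : ∀ x ∈ I, ν x = 0 := by
        intro x hx
        show νbar (QuotientAddGroup.mk' Msub x) = 0
        have h0 : QuotientAddGroup.mk' Msub x = 0 := (by rw [QuotientAddGroup.mk'_apply, QuotientAddGroup.eq_zero_iff]; exact hx)
        rw [h0, map_zero]
      refine ⟨fun q => ν (mu q), by show ν (mu 0) = 0; rw [hmu0, map_zero], ?_, ?_⟩
      · intro s s'
        show χ (F s s') = - ν (mu ⁅s, s'⁆)
        have h1 : χ (F s s') = ν ((F s s' : K) : L) := (hνK _).symm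
        rw [h1, hF, map_sub, hνI _ (LieSubmodule.lie_mem_lie (LieSubmodule.mem_top _)
          (LieSubmodule.mem_top _)), zero_sub]
      · intro s s'
        show χ (G s s') = ν (mu s) + ν (mu s') - ν (mu (s + s'))
        have h1 : χ (G s s') = ν ((G s s' : K) : L) := (hνK _).symm
        rw [h1, hG, map_sub, map_add]
  haveI := hfin
  let ι : (↥(I ⊓ K : LieIdeal ℤ L)) →+ K := AddMonoidHom.mk'
    (fun d => ⟨(d : L), ((LieSubmodule.mem_inf _ _ _).mp d.2).2⟩)
    (fun a b => Subtype.ext rfl)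
  have hιinj : Function.Injective ι := by
    intro a b h
    exact Subtype.ext (congrArg (fun k : K => (k : L)) h)
  let res : (K →+ Additive ℂˣ) →+ ((↥(I ⊓ K : LieIdeal ℤ L)) →+ Additive ℂˣ) :=
    AddMonoidHom.mk' (fun χ => χ.comp ι) (fun a b => AddMonoidHom.add_comp _ _ _)
  have hres_surj : Function.Surjective res := by
    intro ψ
    obtain ⟨h, hh⟩ := extend_hom ι hιinj ψ
    exact ⟨h, AddMonoidHom.ext hh⟩
  have hkereq : Tra.ker = res.ker := by
    ext χ
    rw [AddMonoidHom.mem_ker, AddMonoidHom.mem_ker, hker χ]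
    constructor
    · intro h
      exact AddMonoidHom.ext fun d => h (ι d) ((LieSubmodule.mem_inf _ _ _).mp d.2).1
    · intro h k hk
      have hd : χ (ι (⟨(k : L), (LieSubmodule.mem_inf _ _ _).mpr ⟨hk, k.2⟩⟩ :
          ↥(I ⊓ K : LieIdeal ℤ L))) = 0 := DFunLike.congr_fun h _
      rwa [show ι (⟨(k : L), (LieSubmodule.mem_inf _ _ _).mpr ⟨hk, k.2⟩⟩ :
          ↥(I ⊓ K : LieIdeal ℤ L)) = k from Subtype.ext rfl] at hd
  have e0 : ((K →+ Additive ℂˣ) ⧸ Tra.ker) ≃+ ((K →+ Additive ℂˣ) ⧸ res.ker) :=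
    QuotientAddGroup.quotientAddEquivOfEq hkereq
  have e1 : (Tra.range : AddSubgroup (lieH2 (L ⧸ K) (Additive ℂˣ))) ≃+
      ((K →+ Additive ℂˣ) ⧸ Tra.ker) :=
    (QuotientAddGroup.quotientKerEquivRange Tra).symm
  have e2 := QuotientAddGroup.quotientKerEquivOfSurjective res hres_surj
  obtain ⟨e3⟩ := dual_iso (↥(I ⊓ K : LieIdeal ℤ L))
  let eMain : (↥(I ⊓ K : LieIdeal ℤ L)) ≃+ Tra.range :=
    (e1.trans (e0.trans (e2.trans e3))).symm
  refine ⟨⟨eMain⟩, ?_⟩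
  intro hsurj
  have htop : Tra.range = ⊤ := AddMonoidHom.range_eq_top_of_surjective Tra hsurj
  exact ⟨eMain.trans ((AddEquiv.addSubgroupCongr htop).trans AddSubgroup.topEquiv)⟩
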